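/- Let (λ_n)_{n∈ℤ} be real numbers with λ_{n+1} − λ_n ≥ γ > 0 for all n, and let T > π/γ. Then for any finitely supported complex sequence (a_n), if ∫_{−T}^{T} |Σ_n a_n e^{i λ_n t}|² dt = 0 then a_n = 0 for all n. -/

import Mathlib

open Real MeasureTheory

/-- Uniqueness consequence of Ingham's inequality. -/
theorem ingham_uniqueness (lam : ℤ → ℝ) (γ : ℝ) (hγ : 0 < γ)
    (hgap : ∀ n : ℤ, γ ≤ lam (n + 1) - lam n) (T : ℝ) (hT : π / γ < T)
    (s : Finset ℤ) (a : ℤ → ℂ)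
    (hzero : ∫ t in (-T)..T, ‖∑ n ∈ s, a n * Complex.exp (Complex.I * (lam n) * t)‖ ^ 2 = 0) :
    ∀ n ∈ s, a n = 0 := by
  classical
  have hT0 : 0 < T := lt_trans (div_pos pi_pos hγ) hT
  have hmono : StrictMono lam :=
    strictMono_int_of_lt_succ (fun n => by have := hgap n; linarith)
  set F : ℂ → ℂ := fun z => ∑ n ∈ s, a n * Complex.exp (Complex.I * (lam n) * z) with hF
  have hFdiff : Differentiable ℂ F := by
    apply Differentiable.fun_sum
    intro n _
    exact ((differentiable_id.const_mul (Complex.I * (lam n))).cexp).const_mul (a n)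
  have hcont : Continuous fun t : ℝ => F t := hFdiff.continuous.comp Complex.continuous_ofReal
  have hgcont : Continuous fun t : ℝ => ‖F (t : ℂ)‖ ^ 2 := hcont.norm.pow 2
  have hle : (-T) ≤ T := by linarith
  have hzero' : ∫ t in Set.Ioc (-T) T, ‖F (t : ℂ)‖ ^ 2 = 0 := by
    rw [← intervalIntegral.integral_of_le hle]; exact hzero
  have hInt : IntegrableOn (fun t : ℝ => ‖F (t : ℂ)‖ ^ 2) (Set.Ioc (-T) T) :=
    hgcont.integrableOn_Ioc
  have hae : (fun t : ℝ => ‖F (t : ℂ)‖ ^ 2) =ᵐ[volume.restrict (Set.Ioc (-T) T)] 0 :=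
    (integral_eq_zero_iff_of_nonneg (fun t => by positivity) hInt).mp hzero'
  have hEq : Set.EqOn (fun t : ℝ => ‖F (t : ℂ)‖ ^ 2) 0 (Set.Ioc (-T) T) :=
    Measure.eqOn_Ioc_of_ae_eq volume hae hgcont.continuousOn continuousOn_const
  have hFzero : ∀ t : ℝ, t ∈ Set.Ioc (-T) T → F (t : ℂ) = 0 := by
    intro t ht
    have h := hEq ht
    simp only [Pi.zero_apply] at h
    have : ‖F (t : ℂ)‖ = 0 := by nlinarith [norm_nonneg (F (t : ℂ))]
    exact norm_eq_zero.mp this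
  have hFanalytic : AnalyticOnNhd ℂ F Set.univ :=
    Complex.analyticOnNhd_univ_iff_differentiable.mpr hFdiff
  have hfreq : ∃ᶠ z in nhdsWithin (0 : ℂ) {(0 : ℂ)}ᶜ, F z = 0 := by
    have htend : Filter.Tendsto (fun k : ℕ => ((T / (k + 1) : ℝ) : ℂ)) Filter.atTop
        (nhdsWithin (0 : ℂ) {(0 : ℂ)}ᶜ) := by
      rw [tendsto_nhdsWithin_iff]
      constructor
      · have h1 : Filter.Tendsto (fun k : ℕ => (T / (k + 1) : ℝ)) Filter.atTop (nhds 0) := by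
          have h0 := tendsto_one_div_add_atTop_nhds_zero_nat.const_mul T
          simpa [mul_one_div, div_eq_mul_inv] using h0
        have h2 := (Complex.continuous_ofReal.tendsto 0).comp h1
        rw [Complex.ofReal_zero] at h2
        exact h2
      · refine Filter.Eventually.of_forall fun k => ?_
        have hpos : 0 < (T / (k + 1) : ℝ) := by positivity
        simp only [Set.mem_compl_iff, Set.mem_singleton_iff]
        exact_mod_cast Complex.ofReal_ne_zero.mpr (ne_of_gt hpos)
    refine htend.frequently (Filter.Frequently.of_forall fun k => ?_)
    refine hFzero _ ⟨?_, ?_⟩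
    · have : 0 < (T / (k + 1) : ℝ) := by positivity
      linarith
    · exact div_le_self hT0.le (le_add_of_nonneg_left (Nat.cast_nonneg k))
  have hFall : ∀ z : ℂ, F z = 0 := fun z =>
    hFanalytic.eqOn_zero_of_preconnected_of_frequently_eq_zero isPreconnected_univ
      (Set.mem_univ 0) hfreq (Set.mem_univ z)
  -- Dedekind's linear independence of characters
  set χ : ℤ → (Multiplicative ℝ →* ℂ) := fun n =>
    { toFun := fun t => Complex.exp (Complex.I * (lam n) * ((Multiplicative.toAdd t : ℝ) : ℂ))
      map_one' := by simp
      map_mul' := fun x y => by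
        simp [toAdd_mul, Complex.ofReal_add, mul_add, Complex.exp_add] } with hχ
  have hinjχ : Function.Injective χ := by
    intro m n h
    have hl : lam m = lam n := by
      by_contra hne
      have hd0 : ((lam m : ℂ) - lam n) ≠ 0 := by
        rw [sub_ne_zero]; exact_mod_cast hne
      have h1 : Complex.exp (Complex.I * (lam m) * ((π / (lam m - lam n) : ℝ) : ℂ)) =
          Complex.exp (Complex.I * (lam n) * ((π / (lam m - lam n) : ℝ) : ℂ)) := by
        have := congrArg (fun f : Multiplicative ℝ →* ℂ =>
          f (Multiplicative.ofAdd (π / (lam m - lam n)))) h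
        simpa [hχ] using this
      have h2 : Complex.exp (Complex.I * (lam m) * ((π / (lam m - lam n) : ℝ) : ℂ) -
          Complex.I * (lam n) * ((π / (lam m - lam n) : ℝ) : ℂ)) = 1 := by
        rw [Complex.exp_sub, h1, div_self (Complex.exp_ne_zero _)]
      have h3 : Complex.I * (lam m) * ((π / (lam m - lam n) : ℝ) : ℂ) -
          Complex.I * (lam n) * ((π / (lam m - lam n) : ℝ) : ℂ) = (π : ℂ) * Complex.I := by
        push_cast
        field_simp
      rw [h3, Complex.exp_pi_mul_I] at h2
      norm_num at h2
    exact hmono.injective hl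
  have hli : LinearIndependent ℂ fun n : ℤ => ((χ n : Multiplicative ℝ → ℂ)) :=
    (linearIndependent_monoidHom (Multiplicative ℝ) ℂ).comp χ hinjχ
  intro n hn
  refine linearIndependent_iff'.mp hli s a ?_ n hn
  funext t
  have hz := hFall ((Multiplicative.toAdd t : ℝ) : ℂ)
  simpa [hχ, hF, Finset.sum_apply] using hz
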